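/- arXiv:1311.2147 — 2 statements merged into one kernel-verified Lean document; each statement's English description precedes it below -/
import Mathlib

section
/- After an incremental update on the set E_i(v) of edges incoming to v, every shortest path π from b to s in G' is of one of two types: (i) π is also a shortest path from b to s in G; or (ii) π passes through v and has the form b ⇝ u_j → v ⇝ s for some (u_j,v) ∈ E_i(v), where the prefix b ⇝ u_j is a shortest path from b to u_j in G and the suffix v ⇝ s is a shortest path from v to s in G. -/
open scoped ENNReal

namespace BC

variable {V : Type*}

/-- `p` is a path from `s` to `t` in the weighted digraph with weight function `w`;
an edge is present iff its weight is not `⊤`. -/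
def IsPath (w : V → V → ℝ≥0∞) (s t : V) (p : List V) : Prop :=
  p ≠ [] ∧ p.head? = some s ∧ p.getLast? = some t ∧ p.Chain' (fun a b => w a b ≠ ⊤)

/-- The weight of a path: the sum of the weights of its consecutive edges. -/
noncomputable def pWeight (w : V → V → ℝ≥0∞) (p : List V) : ℝ≥0∞ :=
  ((p.zip p.tail).map fun e => w e.1 e.2).sum

/-- The shortest-path distance `d(s,t)` (equal to `⊤` if no path exists). -/
noncomputable def dist (w : V → V → ℝ≥0∞) (s t : V) : ℝ≥0∞ :=
  ⨅ p ∈ {p | IsPath w s t p}, pWeight w p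

/-- `p` is a shortest path from `s` to `t`. -/
def IsShortest (w : V → V → ℝ≥0∞) (s t : V) (p : List V) : Prop :=
  IsPath w s t p ∧ pWeight w p = dist w s t

/-- `σ_{st}`: the number of shortest paths from `s` to `t`. -/
noncomputable def nsp (w : V → V → ℝ≥0∞) (s t : V) : ℕ :=
  Set.ncard {p | IsShortest w s t p}

/-- `σ_{st}(x)`: the number of shortest paths from `s` to `t` passing through `x`. -/
noncomputable def nspVia (w : V → V → ℝ≥0∞) (s t x : V) : ℕ :=
  Set.ncard {p | IsShortest w s t p ∧ x ∈ p}

/-- The directed edge `(a,b)` lies on the path `p`. -/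
def edgeOn (p : List V) (a b : V) : Prop := (a, b) ∈ p.zip p.tail

/-- The shortest-path DAG rooted at `s`: the edges lying on shortest paths from `s`. -/
def dagSet (w : V → V → ℝ≥0∞) (s : V) : Set (V × V) :=
  {e | w e.1 e.2 ≠ ⊤ ∧ dist w s e.1 ≠ ⊤ ∧ dist w s e.1 + w e.1 e.2 = dist w s e.2}

-- AUX LEMMAS

lemma chain'_iff_zip {R : V → V → Prop} : ∀ (l : List V),
    l.Chain' R ↔ ∀ e ∈ l.zip l.tail, R e.1 e.2
  | [] => by simp [List.Chain']
  | [x] => by simp [List.Chain']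
  | x :: y :: t => by
    unfold List.Chain'
    rw [List.isChain_cons_cons]
    simp only [List.tail_cons, List.zip_cons_cons, List.mem_cons]
    have hrec := chain'_iff_zip (R := R) (y :: t)
    unfold List.Chain' at hrec
    rw [hrec]
    constructor
    · rintro ⟨h1, h2⟩ e (rfl | he)
      · exact h1
      · exact h2 e he
    · intro h
      exact ⟨h (x, y) (Or.inl rfl), fun e he => h e (Or.inr he)⟩

lemma pWeight_cons (w : V → V → ℝ≥0∞) (x y : V) (t : List V) :
    pWeight w (x :: y :: t) = w x y + pWeight w (y :: t) := by
  simp [pWeight]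

lemma pWeight_append (w : V → V → ℝ≥0∞) : ∀ (l₁ : List V) {l₂ : List V} {u x : V},
    l₁.getLast? = some u → l₂.head? = some x →
    pWeight w (l₁ ++ l₂) = pWeight w l₁ + w u x + pWeight w l₂
  | [], _, _, _, h1, _ => by simp at h1
  | [a], l₂, u, x, h1, h2 => by
    obtain ⟨t, rfl⟩ : ∃ t, l₂ = x :: t := by
      cases l₂ with
      | nil => simp at h2
      | cons c t =>
        simp only [List.head?_cons, Option.some.injEq] at h2
        exact ⟨t, by rw [h2]⟩
    simp only [List.getLast?_singleton, Option.some.injEq] at h1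
    subst h1
    rw [List.singleton_append, pWeight_cons]
    simp [pWeight]
  | a :: c :: r, l₂, u, x, h1, h2 => by
    have h1' : (c :: r).getLast? = some u := by
      rw [← h1, List.getLast?_cons_cons]
    have : (a :: c :: r) ++ l₂ = a :: c :: (r ++ l₂) := by simp
    rw [this]
    have hrec := pWeight_append w (c :: r) h1' h2
    rw [List.cons_append] at hrec
    rw [pWeight_cons, hrec, pWeight_cons]
    ring

lemma list_sum_ne_top : ∀ {l : List ℝ≥0∞}, (∀ x ∈ l, x ≠ ⊤) → l.sum ≠ ⊤
  | [], _ => by simp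
  | x :: t, h => by
    simp only [List.sum_cons]
    exact ENNReal.add_ne_top.2 ⟨h x (by simp),
      list_sum_ne_top fun y hy => h y (List.mem_cons_of_mem _ hy)⟩

lemma pWeight_ne_top {w : V → V → ℝ≥0∞} {p : List V}
    (h : p.Chain' fun a b => w a b ≠ ⊤) : pWeight w p ≠ ⊤ := by
  rw [chain'_iff_zip] at h
  refine list_sum_ne_top ?_
  intro y hy
  obtain ⟨e, he, rfl⟩ := List.mem_map.1 hy
  exact h e he

lemma dist_le_pWeight {w : V → V → ℝ≥0∞} {s t : V} {p : List V}
    (h : IsPath w s t p) : dist w s t ≤ pWeight w p :=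
  iInf₂_le p h

lemma exists_path_lt {w : V → V → ℝ≥0∞} {s t : V} {c : ℝ≥0∞}
    (h : dist w s t < c) : ∃ p, IsPath w s t p ∧ pWeight w p < c := by
  by_contra hc
  push_neg at hc
  exact absurd h (not_lt.2 (le_iInf₂ fun p hp => hc p hp))

lemma pWeight_mono {w w' : V → V → ℝ≥0∞} (h : ∀ a b, w' a b ≤ w a b) (p : List V) :
    pWeight w' p ≤ pWeight w p :=
  List.sum_le_sum fun e _ => h e.1 e.2

lemma isPath_mono {w w' : V → V → ℝ≥0∞} (h : ∀ a b, w' a b ≤ w a b) {s t : V} {p : List V}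
    (hp : IsPath w s t p) : IsPath w' s t p := by
  refine ⟨hp.1, hp.2.1, hp.2.2.1, ?_⟩
  exact hp.2.2.2.imp fun {a b} hab => fun htop => hab (top_le_iff.1 (htop ▸ h a b))

lemma dist_mono {w w' : V → V → ℝ≥0∞} (h : ∀ a b, w' a b ≤ w a b) (s t : V) :
    dist w' s t ≤ dist w s t :=
  le_iInf₂ fun p hp => (dist_le_pWeight (isPath_mono h hp)).trans (pWeight_mono h p)

lemma split_at_edge : ∀ {p : List V} {u x : V}, (u, x) ∈ p.zip p.tail →
    ∃ l₁ l₂, p = l₁ ++ l₂ ∧ l₁ ≠ [] ∧ l₂ ≠ [] ∧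
      l₁.getLast? = some u ∧ l₂.head? = some x
  | [], _, _, h => by simp at h
  | [a], _, _, h => by simp at h
  | a :: c :: t, u, x, h => by
    simp only [List.tail_cons, List.zip_cons_cons, List.mem_cons, Prod.mk.injEq] at h
    rcases h with ⟨rfl, rfl⟩ | h
    · exact ⟨[u], x :: t, rfl, by simp, by simp, rfl, rfl⟩
    · obtain ⟨l₁, l₂, heq, h1, h2, h3, h4⟩ := split_at_edge h
      refine ⟨a :: l₁, l₂, by rw [List.cons_append, ← heq], by simp, h2, ?_, h4⟩
      cases l₁ with
      | nil => exact absurd rfl h1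
      | cons d r => rw [List.getLast?_cons_cons]; exact h3

lemma exists_dup_split : ∀ {l : List V}, ¬ l.Nodup →
    ∃ (a : List V) (x : V) (bl cl : List V), l = a ++ x :: bl ++ x :: cl
  | [], h => absurd List.nodup_nil h
  | a :: t, h => by
    by_cases ha : a ∈ t
    · obtain ⟨bl, cl, rfl⟩ := List.append_of_mem ha
      exact ⟨[], a, bl, cl, rfl⟩
    · have ht : ¬ t.Nodup := fun hn => h (List.nodup_cons.2 ⟨ha, hn⟩)
      obtain ⟨al, x, bl, cl, rfl⟩ := exists_dup_split ht
      exact ⟨a :: al, x, bl, cl, rfl⟩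



lemma getLast?_append_right (l : List V) {m : List V} (hm : m ≠ []) :
    (l ++ m).getLast? = m.getLast? := by
  rw [List.getLast?_append]
  exact Option.or_of_isSome (by rwa [List.getLast?_isSome])

lemma head?_append_left {l : List V} (hl : l ≠ []) (m : List V) :
    (l ++ m).head? = l.head? := by
  rw [List.head?_append]
  refine Option.or_of_isSome ?_
  cases l with
  | nil => exact absurd rfl hl
  | cons a t => simp

lemma remove_cycle {w : V → V → ℝ≥0∞} (hpos : ∀ a b, 0 < w a b) {s t : V}
    (a : List V) (x : V) (bl cl : List V)
    (hp : IsPath w s t (a ++ x :: bl ++ x :: cl)) :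
    ∃ q, IsPath w s t q ∧ pWeight w q < pWeight w (a ++ x :: bl ++ x :: cl) := by
  obtain ⟨-, hhead, hlast, hchain⟩ := hp
  unfold List.Chain' at hchain
  rw [List.isChain_append] at hchain
  obtain ⟨hca, hcc, hJ1⟩ := hchain
  rw [List.isChain_append] at hca
  obtain ⟨ha, hcb, hJ0⟩ := hca
  have hysome : (x :: bl).getLast? = some ((x :: bl).getLast (by simp)) :=
    List.getLast?_eq_getLast _
  have hyL : (a ++ x :: bl).getLast? = some ((x :: bl).getLast (by simp)) := by
    rw [getLast?_append_right a (by simp)]; exact hysome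
  have hinner : pWeight w (x :: cl) <
      pWeight w (x :: bl) + w ((x :: bl).getLast (by simp)) x + pWeight w (x :: cl) := by
    have h1 : pWeight w (x :: cl) <
        w ((x :: bl).getLast (by simp)) x + pWeight w (x :: cl) := by
      rw [add_comm]
      exact ENNReal.lt_add_right (pWeight_ne_top hcc) (hpos _ x).ne'
    exact h1.trans_le (by rw [add_assoc]; exact le_add_self)
  have hPw : pWeight w (a ++ x :: bl ++ x :: cl) =
      pWeight w (a ++ x :: bl) + w ((x :: bl).getLast (by simp)) x + pWeight w (x :: cl) :=
    pWeight_append w _ hyL rfl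
  refine ⟨a ++ x :: cl, ⟨by simp, ?_, ?_, ?_⟩, ?_⟩
  · cases a with
    | nil => simpa using hhead
    | cons d r =>
      simp only [List.cons_append, List.append_assoc, List.head?_cons] at hhead ⊢
      exact hhead
  · rw [getLast?_append_right _ (by simp : (x :: cl) ≠ [])] at hlast ⊢
    exact hlast
  · unfold List.Chain'
    rw [List.isChain_append]
    refine ⟨ha, hcc, fun z hz z' hz' => ?_⟩
    simp only [List.head?_cons, Option.mem_def, Option.some.injEq] at hz'
    subst hz'
    exact hJ0 z hz x rfl
  · cases a with
    | nil =>
      rw [hPw]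
      simpa using hinner
    | cons d r =>
      have hasome : (d :: r).getLast? = some ((d :: r).getLast (by simp)) :=
        List.getLast?_eq_getLast _
      have hfin : pWeight w (d :: r) + w ((d :: r).getLast (by simp)) x ≠ ⊤ :=
        ENNReal.add_ne_top.2 ⟨pWeight_ne_top ha, hJ0 _ hasome x rfl⟩
      have e1 : pWeight w ((d :: r) ++ x :: cl) =
          (pWeight w (d :: r) + w ((d :: r).getLast (by simp)) x) + pWeight w (x :: cl) :=
        pWeight_append w _ hasome rfl
      have e2 : pWeight w ((d :: r) ++ x :: bl) =
          pWeight w (d :: r) + w ((d :: r).getLast (by simp)) x + pWeight w (x :: bl) :=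
        pWeight_append w _ hasome rfl
      rw [hPw, e1, e2]
      have := ENNReal.add_lt_add_left
        (a := pWeight w (d :: r) + w ((d :: r).getLast (by simp)) x) hfin hinner
      calc pWeight w (d :: r) + w ((d :: r).getLast (by simp)) x + pWeight w (x :: cl)
          < pWeight w (d :: r) + w ((d :: r).getLast (by simp)) x +
            (pWeight w (x :: bl) + w ((x :: bl).getLast (by simp)) x + pWeight w (x :: cl)) := this
        _ = pWeight w (d :: r) + w ((d :: r).getLast (by simp)) x + pWeight w (x :: bl) +
            w ((x :: bl).getLast (by simp)) x + pWeight w (x :: cl) := by ring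

lemma subpath_opt {w : V → V → ℝ≥0∞} {b s u x : V} {p₁ p₂ : List V}
    (hp : IsShortest w b s (p₁ ++ p₂)) (h1 : p₁.getLast? = some u)
    (h2 : p₂.head? = some x) :
    IsPath w b u p₁ ∧ IsPath w x s p₂ ∧
    pWeight w p₁ = dist w b u ∧ pWeight w p₂ = dist w x s := by
  obtain ⟨⟨hne, hhead, hlast, hchain⟩, hmin⟩ := hp
  have h1ne : p₁ ≠ [] := fun h => by simp [h] at h1
  have h2ne : p₂ ≠ [] := fun h => by simp [h] at h2
  unfold List.Chain' at hchain
  rw [List.isChain_append] at hchain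
  obtain ⟨hc1, hc2, hJ⟩ := hchain
  have hedge : w u x ≠ ⊤ := hJ u h1 x h2
  rw [head?_append_left h1ne] at hhead
  rw [getLast?_append_right _ h2ne] at hlast
  have hpath1 : IsPath w b u p₁ := ⟨h1ne, hhead, h1, hc1⟩
  have hpath2 : IsPath w x s p₂ := ⟨h2ne, h2, hlast, hc2⟩
  have hsplit : pWeight w (p₁ ++ p₂) = pWeight w p₁ + w u x + pWeight w p₂ :=
    pWeight_append w p₁ h1 h2
  have hfin1 : pWeight w p₁ ≠ ⊤ := pWeight_ne_top hc1
  have hfin2 : pWeight w p₂ ≠ ⊤ := pWeight_ne_top hc2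
  rw [hsplit] at hmin
  refine ⟨hpath1, hpath2, ?_, ?_⟩
  · refine le_antisymm ?_ (dist_le_pWeight hpath1)
    by_contra hlt
    obtain ⟨q, hq, hqlt⟩ := exists_path_lt (not_le.1 hlt)
    have hq1 : q.getLast? = some u := hq.2.2.1
    have hqpath : IsPath w b s (q ++ p₂) := by
      refine ⟨by simp [hq.1], ?_, ?_, ?_⟩
      · rw [head?_append_left hq.1]; exact hq.2.1
      · rw [getLast?_append_right _ h2ne]; exact hlast
      · unfold List.Chain'
        rw [List.isChain_append]
        refine ⟨hq.2.2.2, hc2, fun z hz z' hz' => ?_⟩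
        rw [hq1, Option.mem_def, Option.some.injEq] at hz
        rw [h2, Option.mem_def, Option.some.injEq] at hz'
        subst hz; subst hz'; exact hedge
    have hle : dist w b s ≤ pWeight w (q ++ p₂) := dist_le_pWeight hqpath
    rw [pWeight_append w q hq1 h2] at hle
    have hstrict : pWeight w q + w u x + pWeight w p₂ <
        pWeight w p₁ + w u x + pWeight w p₂ := by
      rw [add_assoc, add_assoc]
      exact ENNReal.add_lt_add_right (ENNReal.add_ne_top.2 ⟨hedge, hfin2⟩) hqlt
    exact absurd (hle.trans_lt (hstrict.trans_eq hmin)) (lt_irrefl _)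
  · refine le_antisymm ?_ (dist_le_pWeight hpath2)
    by_contra hlt
    obtain ⟨q, hq, hqlt⟩ := exists_path_lt (not_le.1 hlt)
    have hq2 : q.head? = some x := hq.2.1
    have hqpath : IsPath w b s (p₁ ++ q) := by
      refine ⟨by simp [h1ne], ?_, ?_, ?_⟩
      · rw [head?_append_left h1ne]; exact hhead
      · rw [getLast?_append_right _ hq.1]; exact hq.2.2.1
      · unfold List.Chain'
        rw [List.isChain_append]
        refine ⟨hc1, hq.2.2.2, fun z hz z' hz' => ?_⟩
        rw [h1, Option.mem_def, Option.some.injEq] at hz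
        rw [hq2, Option.mem_def, Option.some.injEq] at hz'
        subst hz; subst hz'; exact hedge
    have hle : dist w b s ≤ pWeight w (p₁ ++ q) := dist_le_pWeight hqpath
    rw [pWeight_append w p₁ h1 hq2] at hle
    have hstrict : pWeight w p₁ + w u x + pWeight w q <
        pWeight w p₁ + w u x + pWeight w p₂ :=
      ENNReal.add_lt_add_left (ENNReal.add_ne_top.2 ⟨hfin1, hedge⟩) hqlt
    exact absurd (hle.trans_lt (hstrict.trans_eq hmin)) (lt_irrefl _)



/-- after an incremental update on the edges `E_i(v)` incoming to `v`,
every shortest path `p` from `b` to `s` in `G'` either (i) is a shortest path in `G`,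
or (ii) passes through `v`, having the form `b ⇝ u → v ⇝ s` for some `(u,v) ∈ E_i(v)`,
with prefix a shortest path from `b` to `u` in `G` and suffix a shortest path from
`v` to `s` in `G`. -/
theorem vertex_update_path_two_types [Fintype V]
(w w' : V → V → ℝ≥0∞) (v : V) (U : Finset V)
    (hpos : ∀ a b, 0 < w a b) (hpos' : ∀ a b, 0 < w' a b)
    (hdec : ∀ u ∈ U, w' u v < w u v)
    (hsame : ∀ a b : V, ¬(b = v ∧ a ∈ U) → w' a b = w a b)
    (b s : V) (p : List V) (hp : IsShortest w' b s p) :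
    IsShortest w b s p ∨
    ∃ u ∈ U, ∃ p₁ p₂ : List V, p = p₁ ++ p₂ ∧
      p₁.getLast? = some u ∧ p₂.head? = some v ∧
      IsShortest w b u p₁ ∧ IsShortest w v s p₂ := by
  classical
  have hle : ∀ a c, w' a c ≤ w a c := by
    intro a c
    by_cases h : c = v ∧ a ∈ U
    · exact h.1 ▸ (hdec a h.2).le
    · exact (hsame a c h).le
  by_cases hcase : ∃ e ∈ p.zip p.tail, e.2 = v ∧ e.1 ∈ U
  · right
    obtain ⟨⟨u0, c0⟩, he, hc0, hu0⟩ := hcase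
    have hc0' : c0 = v := hc0
    have he2 : (u0, v) ∈ p.zip p.tail := hc0' ▸ he
    have hu0' : u0 ∈ U := hu0
    clear he hc0 hc0' hu0
    have hnd : p.Nodup := by
      by_contra hdup
      obtain ⟨al, x, bll, cll, rfl⟩ := exists_dup_split hdup
      obtain ⟨q, hq, hlt⟩ := remove_cycle hpos' al x bll cll hp.1
      exact absurd (dist_le_pWeight hq) (not_le.2 (hp.2 ▸ hlt))
    obtain ⟨p₁, p₂, rfl, h1ne, h2ne, hlastu, hheadv⟩ := split_at_edge he2
    obtain ⟨hpath1, hpath2, hw1, hw2⟩ := subpath_opt hp hlastu hheadv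
    rw [List.nodup_append] at hnd
    obtain ⟨hnd1, hnd2, hdisj⟩ := hnd
    have hvp2 : v ∈ p₂ := by
      cases p₂ with
      | nil => exact absurd rfl h2ne
      | cons c t =>
        simp only [List.head?_cons, Option.some.injEq] at hheadv
        exact hheadv ▸ (List.mem_cons_self : c ∈ c :: t)
    have hne1 : ∀ e ∈ p₁.zip p₁.tail, w' e.1 e.2 = w e.1 e.2 := by
      intro e he'
      refine hsame e.1 e.2 ?_
      rintro ⟨hev, -⟩
      have hm : e.2 ∈ p₁ := List.mem_of_mem_tail (List.of_mem_zip he').2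
      exact hdisj _ hm _ hvp2 hev
    have hne2 : ∀ e ∈ p₂.zip p₂.tail, w' e.1 e.2 = w e.1 e.2 := by
      intro e he'
      refine hsame e.1 e.2 ?_
      rintro ⟨hev, -⟩
      have h2t : e.2 ∈ p₂.tail := (List.of_mem_zip he').2
      cases p₂ with
      | nil => exact absurd rfl h2ne
      | cons c t =>
        simp only [List.head?_cons, Option.some.injEq] at hheadv
        subst hheadv
        rw [List.nodup_cons] at hnd2
        exact hnd2.1 (hev ▸ h2t)
    have hpw1 : pWeight w p₁ = pWeight w' p₁ :=
      congrArg List.sum (List.map_congr_left fun e he' => (hne1 e he').symm)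
    have hpw2 : pWeight w p₂ = pWeight w' p₂ :=
      congrArg List.sum (List.map_congr_left fun e he' => (hne2 e he').symm)
    have hp1w : IsPath w b u0 p₁ := by
      refine ⟨hpath1.1, hpath1.2.1, hpath1.2.2.1, ?_⟩
      rw [chain'_iff_zip]
      intro e he'
      rw [← hne1 e he']
      exact (chain'_iff_zip p₁).1 hpath1.2.2.2 e he'
    have hp2w : IsPath w v s p₂ := by
      refine ⟨hpath2.1, hpath2.2.1, hpath2.2.2.1, ?_⟩
      rw [chain'_iff_zip]
      intro e he'
      rw [← hne2 e he']
      exact (chain'_iff_zip p₂).1 hpath2.2.2.2 e he'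
    refine ⟨u0, hu0', p₁, p₂, rfl, hlastu, hheadv, ⟨hp1w, ?_⟩, ⟨hp2w, ?_⟩⟩
    · refine le_antisymm ?_ (dist_le_pWeight hp1w)
      calc pWeight w p₁ = dist w' b u0 := by rw [hpw1, hw1]
        _ ≤ dist w b u0 := dist_mono hle b u0
    · refine le_antisymm ?_ (dist_le_pWeight hp2w)
      calc pWeight w p₂ = dist w' v s := by rw [hpw2, hw2]
        _ ≤ dist w v s := dist_mono hle v s
  · left
    push_neg at hcase
    have hne : ∀ e ∈ p.zip p.tail, w' e.1 e.2 = w e.1 e.2 := fun e he =>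
      hsame e.1 e.2 (by rintro ⟨h1, h2⟩; exact hcase e he h1 h2)
    have hpw : pWeight w p = pWeight w' p :=
      congrArg List.sum (List.map_congr_left fun e he => (hne e he).symm)
    have hpath : IsPath w b s p := by
      refine ⟨hp.1.1, hp.1.2.1, hp.1.2.2.1, ?_⟩
      rw [chain'_iff_zip]
      intro e he
      rw [← hne e he]
      exact (chain'_iff_zip p).1 hp.1.2.2.2 e he
    refine ⟨hpath, le_antisymm ?_ (dist_le_pWeight hpath)⟩
    calc pWeight w p = dist w' b s := by rw [hpw, hp.2]
      _ ≤ dist w b s := dist_mono hle b s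


end BC
end

section
/- After an incremental update on the set E_i(v) of edges incoming to v, if flag(b,s) = WT-changed (i.e., d'(b,s) < d(b,s)), then every shortest path from b to s in G' passes through the vertex v. -/
open scoped ENNReal

namespace BC

variable {V : Type*}

/-- flag(s,t) = WT-changed : the distance from `s` to `t` decreased. -/
def WTchanged (w w' : V → V → ℝ≥0∞) (s t : V) : Prop := dist w' s t < dist w s t

/-- flag(s,t) = NUM-changed : same distance, strictly more shortest paths. -/
def NUMchanged (w w' : V → V → ℝ≥0∞) (s t : V) : Prop :=
  dist w' s t = dist w s t ∧ nsp w s t < nsp w' s t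

/-- flag(s,t) = UN-changed : same distance, same number of shortest paths. -/
def UNchanged (w w' : V → V → ℝ≥0∞) (s t : V) : Prop :=
  dist w' s t = dist w s t ∧ nsp w' s t = nsp w s t


lemma chain'_congr_zip {w w' : V → V → ℝ≥0∞} :
    ∀ (p : List V), (∀ a c : V, (a, c) ∈ p.zip p.tail → w' a c = w a c) →
      (p.Chain' (fun a b => w' a b ≠ ⊤) → p.Chain' (fun a b => w a b ≠ ⊤)) ∧
      pWeight w p = pWeight w' p
  | [], _ => by simp [pWeight, List.Chain']
  | [x], _ => by simp [pWeight, List.Chain']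
  | x :: y :: rest, h => by
    have hxy : w' x y = w x y := h x y (by simp)
    have ih := chain'_congr_zip (y :: rest) (fun a c hac => h a c (by
      simp only [List.zip, List.tail] at hac ⊢
      exact List.mem_cons_of_mem _ hac))
    constructor
    · intro hc
      rw [List.Chain', List.isChain_cons_cons] at hc ⊢
      exact ⟨hxy ▸ hc.1, ih.1 hc.2⟩
    · simp only [pWeight, List.tail, List.zip_cons_cons, List.map_cons, List.sum_cons] at *
      rw [hxy, ih.2]

/-- after an incremental update on the edges `E_i(v)` incoming to `v`,
if flag(b,s) = WT-changed (i.e. `d'(b,s) < d(b,s)`) then every shortest path from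
`b` to `s` in `G'` passes through `v`. -/
theorem wtchanged_through_v [Fintype V]
(w w' : V → V → ℝ≥0∞) (v : V) (U : Finset V)
    (hpos : ∀ a b, 0 < w a b) (hpos' : ∀ a b, 0 < w' a b)
    (hdec : ∀ u ∈ U, w' u v < w u v)
    (hsame : ∀ a b : V, ¬(b = v ∧ a ∈ U) → w' a b = w a b)
    (b s : V) (hwt : WTchanged w w' b s) (p : List V)
    (hp : IsShortest w' b s p) : v ∈ p := by
  by_contra hv
  have hagree : ∀ a c : V, (a, c) ∈ p.zip p.tail → w' a c = w a c := by
    intro a c hac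
    apply hsame
    rintro ⟨rfl, -⟩
    exact hv (List.mem_of_mem_tail (List.of_mem_zip hac).2)
  obtain ⟨hchain, hweq⟩ := chain'_congr_zip p hagree
  have hpathw : IsPath w b s p :=
    ⟨hp.1.1, hp.1.2.1, hp.1.2.2.1, hchain (hp.1.2.2.2)⟩
  have hle : dist w b s ≤ pWeight w p := biInf_le _ hpathw
  rw [hweq, hp.2] at hle
  exact absurd hwt (not_lt.mpr hle)

end BC
end
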